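/- Let 1 < p < 2 and let a, c ∈ ℝ^n. Then (p-1)·|a - c|² / (|a| + |c|)^{2-p} ≤ (|a|^{p-2} a - |c|^{p-2} c) · (a - c), where · denotes the Euclidean inner product and |·| the Euclidean norm (interpreting the left side as 0 when a = c = 0). -/

import Mathlib

open Real

private lemma tangent_aux {q A C : ℝ} (hq0 : 0 < q) (hq1 : q ≤ 1) (hA : 0 < A) (hC : 0 ≤ C) :
    q * A ^ (q - 1) * (A - C) ≤ A ^ q - C ^ q := by
  have hAq : (0:ℝ) < A ^ q := Real.rpow_pos_of_pos hA q
  have hA1 : A ^ (q - 1) = A ^ q / A := by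
    rw [Real.rpow_sub hA, Real.rpow_one]
  have hs : (-1:ℝ) ≤ C / A - 1 := by
    have : 0 ≤ C / A := div_nonneg hC hA.le
    linarith
  have hb := rpow_one_add_le_one_add_mul_self hs hq0.le hq1
  have hCA : C ^ q = (1 + (C / A - 1)) ^ q * A ^ q := by
    rw [← Real.mul_rpow (by linarith) hA.le]
    congr 1
    field_simp
    ring
  have h2 : C ^ q ≤ (1 + q * (C / A - 1)) * A ^ q :=
    hCA ▸ mul_le_mul_of_nonneg_right hb hAq.le
  have hexp : q * (A ^ (q-1)) * (A - C) = -((1 + q * (C / A - 1)) * A ^ q) + A ^ q := by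
    rw [hA1]; field_simp; ring
  linarith [h2, hexp.le, hexp.ge]

private lemma end1 {p A C : ℝ} (hp1 : 1 < p) (hp2 : p < 2) (hC : 0 ≤ C) (hCA : C ≤ A) :
    (p-1) * (A-C)^2 * (A+C)^(p-2) ≤ (A-C) * (A^(p-1) - C^(p-1)) := by
  have hA : 0 ≤ A := hC.trans hCA
  rcases eq_or_lt_of_le hA with h0 | hApos
  · have hA0 : A = 0 := h0.symm
    have hC0 : C = 0 := le_antisymm (hA0 ▸ hCA) hC
    simp [hA0, hC0, Real.zero_rpow (by linarith : p - 2 ≠ 0)]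
  · have ht := tangent_aux (q := p - 1) (A := A) (C := C) (by linarith) (by linarith) hApos hC
    rw [show p - 1 - 1 = p - 2 by ring] at ht
    have hmono : (A+C)^(p-2) ≤ A^(p-2) :=
      Real.rpow_le_rpow_of_nonpos hApos (by linarith) (by linarith)
    have h1 : (p-1)*(A-C)^2*(A+C)^(p-2) ≤ (p-1)*(A-C)^2*A^(p-2) := by
      apply mul_le_mul_of_nonneg_left hmono
      exact mul_nonneg (by linarith) (sq_nonneg _)
    have h2 : (A-C) * ((p-1)*A^(p-2)*(A-C)) ≤ (A-C)*(A^(p-1)-C^(p-1)) :=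
      mul_le_mul_of_nonneg_left ht (by linarith)
    nlinarith [h1, h2]

private lemma end2 {p A C : ℝ} (hp1 : 1 < p) (hp2 : p < 2) (hA : 0 ≤ A) (hC : 0 ≤ C) :
    (p-1) * (A+C)^2 * (A+C)^(p-2) ≤ (A+C) * (A^(p-1) + C^(p-1)) := by
  rcases eq_or_lt_of_le (by linarith : (0:ℝ) ≤ A + C) with h0 | hS
  · have hA0 : A = 0 := by linarith
    have hC0 : C = 0 := by linarith
    simp [hA0, hC0, Real.zero_rpow (by linarith : p - 2 ≠ 0),
      Real.zero_rpow (by linarith : p - 1 ≠ 0)]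
  · have hpow : (0:ℝ) ≤ (A+C)^(p-2) := Real.rpow_nonneg (by linarith) _
    have key1 : A * (A+C)^(p-2) ≤ A^(p-1) := by
      rcases eq_or_lt_of_le hA with hA0 | hApos
      · simp [← hA0, Real.zero_rpow (by linarith : p - 1 ≠ 0)]
      · have hmono : (A+C)^(p-2) ≤ A^(p-2) :=
          Real.rpow_le_rpow_of_nonpos hApos (by linarith) (by linarith)
        have : A * (A+C)^(p-2) ≤ A * A^(p-2) := mul_le_mul_of_nonneg_left hmono hA
        have hE : A * A^(p-2) = A^(p-1) := by
          rw [show p - 1 = (p-2) + 1 by ring, Real.rpow_add_one (ne_of_gt hApos)]; ring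
        linarith
    have key2 : C * (A+C)^(p-2) ≤ C^(p-1) := by
      rcases eq_or_lt_of_le hC with hC0 | hCpos
      · simp [← hC0, Real.zero_rpow (by linarith : p - 1 ≠ 0)]
      · have hmono : (A+C)^(p-2) ≤ C^(p-2) :=
          Real.rpow_le_rpow_of_nonpos hCpos (by linarith) (by linarith)
        have : C * (A+C)^(p-2) ≤ C * C^(p-2) := mul_le_mul_of_nonneg_left hmono hC
        have hE : C * C^(p-2) = C^(p-1) := by
          rw [show p - 1 = (p-2) + 1 by ring, Real.rpow_add_one (ne_of_gt hCpos)]; ring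
        linarith
    nlinarith [mul_le_mul_of_nonneg_left key1 hS.le, mul_le_mul_of_nonneg_left key2 hS.le,
      mul_nonneg (mul_nonneg (mul_nonneg (by linarith : (0:ℝ) ≤ 2 - p) hS.le) hS.le) hpow]

private lemma rpow_mul_sq {p A : ℝ} (hp1 : 1 < p) (hp2 : p < 2) (hA : 0 ≤ A) :
    A ^ (p-2) * A = A ^ (p-1) := by
  rcases eq_or_lt_of_le hA with hA0 | hApos
  · simp [← hA0, Real.zero_rpow (by linarith : p - 1 ≠ 0)]
  · rw [show p - 1 = (p-2) + 1 by ring, Real.rpow_add_one (ne_of_gt hApos)]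

private lemma keylem' {p A C t : ℝ} (hp1 : 1 < p) (hp2 : p < 2) (hC : 0 ≤ C) (hCA : C ≤ A)
    (ht1 : t ≤ A*C) (ht2 : -(A*C) ≤ t) :
    (p-1)*(A^2+C^2-2*t)*(A+C)^(p-2) ≤ A^(p-2)*A^2 + C^(p-2)*C^2 - (A^(p-2)+C^(p-2))*t := by
  have hA : 0 ≤ A := hC.trans hCA
  have hsA := rpow_mul_sq hp1 hp2 hA
  have hsC := rpow_mul_sq hp1 hp2 hC
  have e1 := end1 hp1 hp2 hC hCA
  have e2 := end2 hp1 hp2 hA hC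
  -- rewrite A^(p-1) = A^(p-2)*A in e1 e2
  rw [← hsA, ← hsC] at e1 e2
  set s := A^(p-2) with hs
  set r := C^(p-2) with hr
  set E := (A+C)^(p-2) with hE
  rcases le_or_gt (2*(p-1)*E) (s + r) with hv | hv
  · -- min at t = A*C, use e1
    nlinarith [e1, mul_nonneg (by linarith : (0:ℝ) ≤ s + r - 2*(p-1)*E) (by linarith : (0:ℝ) ≤ A*C - t)]
  · -- min at t = -A*C, use e2
    nlinarith [e2, mul_nonneg (by linarith : (0:ℝ) ≤ 2*(p-1)*E - (s+r)) (by linarith : (0:ℝ) ≤ t + A*C)]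

private lemma keylem {p A C t : ℝ} (hp1 : 1 < p) (hp2 : p < 2) (hA : 0 ≤ A) (hC : 0 ≤ C)
    (ht1 : t ≤ A*C) (ht2 : -(A*C) ≤ t) :
    (p-1)*(A^2+C^2-2*t)*(A+C)^(p-2) ≤ A^(p-2)*A^2 + C^(p-2)*C^2 - (A^(p-2)+C^(p-2))*t := by
  rcases le_total C A with h | h
  · exact keylem' hp1 hp2 hC h ht1 ht2
  · have := keylem' (A := C) (C := A) (t := t) hp1 hp2 hA h
      (by linarith [ht1]) (by rw [mul_comm]; exact ht2)
    rw [add_comm C A] at this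
    linarith

theorem stmt_2 (n : ℕ) (p : ℝ) (hp1 : 1 < p) (hp2 : p < 2)
    (a c : EuclideanSpace ℝ (Fin n)) :
    (p - 1) * ‖a - c‖ ^ 2 / (‖a‖ + ‖c‖) ^ (2 - p) ≤
      inner ℝ ((‖a‖ ^ (p - 2)) • a - (‖c‖ ^ (p - 2)) • c) (a - c) := by
  set A := ‖a‖ with hA
  set C := ‖c‖ with hC
  set t : ℝ := inner ℝ a c with ht
  have habs : |t| ≤ A * C := abs_real_inner_le_norm a c
  have ht1 : t ≤ A * C := (abs_le.mp habs).2
  have ht2 : -(A*C) ≤ t := by linarith [(abs_le.mp habs).1]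
  have hnorm : ‖a - c‖^2 = A^2 - 2*t + C^2 := norm_sub_sq_real a c
  have hinner : (inner ℝ ((A ^ (p - 2)) • a - (C ^ (p - 2)) • c) (a - c) : ℝ)
      = A^(p-2)*A^2 + C^(p-2)*C^2 - (A^(p-2)+C^(p-2))*t := by
    simp only [inner_sub_left, inner_sub_right, real_inner_smul_left,
      real_inner_self_eq_norm_sq, ← hA, ← hC, ← ht]
    have hca : (inner ℝ c a : ℝ) = t := by rw [ht]; exact real_inner_comm a c
    rw [hca]
    ring
  rw [hinner, hnorm]
  have hdiv : (p - 1) * (A^2 - 2*t + C^2) / (A + C) ^ (2 - p)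
      = (p - 1) * (A^2 - 2*t + C^2) * (A + C) ^ (p - 2) := by
    rw [div_eq_mul_inv, ← Real.rpow_neg (by positivity), show -(2-p) = p - 2 by ring]
  rw [hdiv]
  have := keylem (A := A) (C := C) (t := t) hp1 hp2 (norm_nonneg a) (norm_nonneg c) ht1 ht2
  nlinarith [this]
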